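/- For fixed z ∈ ℂ, define the operator T_z on smooth functions f : ℝ → ℂ by (T_z f)(x) = z x f(x) − conj(z) f'(x). Then for every l ∈ ℕ and every x ∈ ℝ, the series ∑_{n=0}^∞ (1/n!) (T_zⁿ (y ↦ y^l))(x) converges and its sum equals (x − conj(z))^l e^{−|z|²/2} e^{z x}. -/

import Mathlib

open Filter ComplexConjugate

/-- The operator `T_z f = z x f(x) − conj z f'(x)`. -/
noncomputable def Tz (z : ℂ) (f : ℝ → ℂ) : ℝ → ℂ :=
  fun x => z * (x : ℂ) * f x - conj z * deriv f x

/-- Complex version of the operator. -/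
noncomputable def Sz (z : ℂ) (f : ℂ → ℂ) : ℂ → ℂ :=
  fun w => z * w * f w - conj z * deriv f w

lemma Sz_diff (z : ℂ) {f : ℂ → ℂ} (hf : Differentiable ℂ f) :
    Differentiable ℂ (Sz z f) := by
  have hd : Differentiable ℂ (deriv f) :=
    ((contDiff_infty_iff_deriv.mp hf.contDiff).2).differentiable (by simp)
  exact ((differentiable_id.const_mul z).mul hf).sub (hd.const_mul _)

lemma Rz_diff (z : ℂ) (l : ℕ) (n : ℕ) :
    Differentiable ℂ ((Sz z)^[n] (fun w : ℂ => w ^ l)) := by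
  induction n with
  | zero => exact (differentiable_id.pow l)
  | succ n ih => rw [Function.iterate_succ_apply']; exact Sz_diff z ih

lemma lemB (z : ℂ) (l : ℕ) (n : ℕ) :
    (Tz z)^[n] (fun y : ℝ => (y : ℂ) ^ l)
      = fun y : ℝ => (Sz z)^[n] (fun w : ℂ => w ^ l) (y : ℂ) := by
  induction n with
  | zero => rfl
  | succ n ih =>
    rw [Function.iterate_succ_apply', Function.iterate_succ_apply', ih]
    funext y
    have hR := Rz_diff z l n
    have hder : deriv (fun t : ℝ => (Sz z)^[n] (fun w : ℂ => w ^ l) (t : ℂ)) y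
        = deriv ((Sz z)^[n] (fun w : ℂ => w ^ l)) (y : ℂ) :=
      ((hR (y : ℂ)).hasDerivAt.comp_ofReal).deriv
    simp only [Tz, Sz, hder]

lemma lemA (z : ℂ) (l : ℕ) (x : ℝ) (n : ℕ) (t : ℂ) :
    iteratedDeriv n
      (fun s : ℂ => ((x : ℂ) - s * conj z) ^ l
        * Complex.exp (s * z * x - s ^ 2 * (z * conj z) / 2)) t
    = (Sz z)^[n] (fun w : ℂ => w ^ l) ((x : ℂ) - t * conj z)
        * Complex.exp (t * z * x - t ^ 2 * (z * conj z) / 2) := by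
  induction n generalizing t with
  | zero => simp
  | succ n ih =>
    rw [iteratedDeriv_succ]
    have hfun : iteratedDeriv n
        (fun s : ℂ => ((x : ℂ) - s * conj z) ^ l
          * Complex.exp (s * z * x - s ^ 2 * (z * conj z) / 2))
        = fun t : ℂ => (Sz z)^[n] (fun w : ℂ => w ^ l) ((x : ℂ) - t * conj z)
            * Complex.exp (t * z * x - t ^ 2 * (z * conj z) / 2) := funext ih
    rw [hfun]
    set R := (Sz z)^[n] (fun w : ℂ => w ^ l) with hRdef
    have hR := Rz_diff z l n
    have h1 : HasDerivAt (fun s : ℂ => R ((x : ℂ) - s * conj z))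
        (deriv R ((x : ℂ) - t * conj z) * (-(conj z))) t := by
      have hinner : HasDerivAt (fun s : ℂ => (x : ℂ) - s * conj z) (-(conj z)) t := by
        simpa using ((hasDerivAt_id t).mul_const (conj z)).const_sub (x : ℂ)
      exact (hR _).hasDerivAt.comp t hinner
    have h2 : HasDerivAt (fun s : ℂ => Complex.exp (s * z * x - s ^ 2 * (z * conj z) / 2))
        (Complex.exp (t * z * x - t ^ 2 * (z * conj z) / 2)
          * (z * x - t * (z * conj z))) t := by
      have hexp : HasDerivAt (fun s : ℂ => s * z * x - s ^ 2 * (z * conj z) / 2)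
          (z * x - t * (z * conj z)) t := by
        have ha : HasDerivAt (fun s : ℂ => s * z * x) (z * x) t := by
          simpa [mul_assoc] using (hasDerivAt_id t).mul_const (z * (x : ℂ))
        have hb : HasDerivAt (fun s : ℂ => s ^ 2 * (z * conj z) / 2)
            (t * (z * conj z)) t := by
          have := ((hasDerivAt_pow 2 t).mul_const (z * conj z)).div_const 2
          exact this.congr_deriv (by norm_num; ring)
        exact ha.sub hb
      simpa using hexp.cexp
    have := (h1.mul h2).deriv
    refine Eq.trans this ?_
    rw [Function.iterate_succ_apply']
    simp only [Sz]
    ring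

theorem displacement_series_on_monomials (z : ℂ) (l : ℕ) (x : ℝ) :
    Tendsto (fun N : ℕ => ∑ n ∈ Finset.range N,
        (1 / (n.factorial : ℂ)) * ((Tz z)^[n] (fun y : ℝ => (y : ℂ) ^ l)) x)
      atTop (nhds (((x : ℂ) - conj z) ^ l *
        Complex.exp (-(‖z‖ : ℂ) ^ 2 / 2) * Complex.exp (z * x))) := by
  have hg : Differentiable ℂ (fun s : ℂ => ((x : ℂ) - s * conj z) ^ l
      * Complex.exp (s * z * x - s ^ 2 * (z * conj z) / 2)) := by
    apply Differentiable.mul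
    · exact ((differentiable_const _).sub (differentiable_id.mul_const _)).pow l
    · exact Complex.differentiable_exp.comp
        (((differentiable_id.mul_const z).mul_const _).sub
          (((differentiable_id.pow 2).mul_const _).div_const 2))
  have hzc : z * conj z = ((‖z‖ : ℂ)) ^ 2 := by
    rw [Complex.mul_conj, Complex.normSq_eq_norm_sq]
    push_cast
    ring
  have hsum := Complex.hasSum_taylorSeries_of_entire hg 0 1
  have h1 : (fun n : ℕ => (n.factorial : ℂ)⁻¹ • ((1 : ℂ) - 0) ^ n •
      iteratedDeriv n (fun s : ℂ => ((x : ℂ) - s * conj z) ^ l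
        * Complex.exp (s * z * x - s ^ 2 * (z * conj z) / 2)) 0)
      = fun n : ℕ => (1 / (n.factorial : ℂ)) *
          ((Tz z)^[n] (fun y : ℝ => (y : ℂ) ^ l)) x := by
    funext n
    rw [lemA z l x n 0, lemB z l n]
    simp [smul_eq_mul, one_div]
  have h2 : ((x : ℂ) - 1 * conj z) ^ l
      * Complex.exp (1 * z * x - 1 ^ 2 * (z * conj z) / 2)
      = ((x : ℂ) - conj z) ^ l *
        Complex.exp (-(‖z‖ : ℂ) ^ 2 / 2) * Complex.exp (z * x) := by
    rw [hzc]
    rw [show (1 : ℂ) * z * x - 1 ^ 2 * ((‖z‖ : ℂ)) ^ 2 / 2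
        = -(‖z‖ : ℂ) ^ 2 / 2 + z * x by ring, Complex.exp_add]
    ring
  rw [h1, h2] at hsum
  exact hsum.tendsto_sum_nat
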